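/- Let c : ℝ → ℝ be continuous T-periodic with positive mean, and let W be the unique positive T-periodic solution of W' = W(c(t) − W). Then for any solution w of the initial value problem w' = w(c(t) − w), w(0) = w₀ > 0, one has w(t + nT) → W(t) as n → ∞, uniformly for t ∈ [0, T]. -/

import Mathlib

open Real Filter Set intervalIntegral MeasureTheory Topology

/-- Any solution of the logistic equation w' = w(c - w) with positive initial data
converges, in the periodic sense, to the unique positive T-periodic solution W:
w(t + nT) → W(t) uniformly on [0, T]. -/
theorem logistic_converges_to_periodic
    (T : ℝ) (hT : 0 < T) (c : ℝ → ℝ) (hc : Continuous c)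
    (hper : ∀ t, c (t + T) = c t)
    (hmean : 0 < (1 / T) * ∫ t in (0:ℝ)..T, c t)
    (W : ℝ → ℝ) (hW : Differentiable ℝ W) (hWpos : ∀ t, 0 < W t)
    (hWode : ∀ t, deriv W t = W t * (c t - W t))
    (hWper : ∀ t, W (t + T) = W t)
    (w : ℝ → ℝ) (w₀ : ℝ) (hw₀ : 0 < w₀)
    (hw : Differentiable ℝ w) (hwinit : w 0 = w₀)
    (hwode : ∀ t ≥ 0, deriv w t = w t * (c t - w t)) :
    TendstoUniformlyOn (fun (n : ℕ) (t : ℝ) => w (t + n * T)) W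
      Filter.atTop (Set.Icc 0 T) := by
  have hwc : Continuous w := hw.continuous
  set I : ℝ → ℝ := fun t => ∫ s in (0:ℝ)..t, c s with hIdef
  have hI : ∀ t, HasDerivAt I (c t) t := fun t => (hc.integral_hasStrictDerivAt 0 t).hasDerivAt
  have hId : Differentiable ℝ I := fun t => (hI t).differentiableAt
  have hIc : Continuous I := hId.continuous
  -- positivity of w on [0,∞)
  set J : ℝ → ℝ := fun t => ∫ s in (0:ℝ)..t, (c s - w s) with hJdef
  have hJ : ∀ t, HasDerivAt J (c t - w t) t :=
    fun t => ((hc.sub hwc).integral_hasStrictDerivAt 0 t).hasDerivAt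
  have hJd : Differentiable ℝ J := fun t => (hJ t).differentiableAt
  have hJc : Continuous J := hJd.continuous
  have hwpos : ∀ t ≥ (0:ℝ), 0 < w t := by
    intro b hb
    have key : ∀ x ∈ Icc (0:ℝ) b,
        (fun t => w t * Real.exp (-(J t))) x = (fun t => w t * Real.exp (-(J t))) 0 := by
      apply constant_of_has_deriv_right_zero
      · exact (hwc.mul (Real.continuous_exp.comp hJc.neg)).continuousOn
      · intro x hx
        have h1 : HasDerivAt (fun t => w t * Real.exp (-(J t)))
            (deriv w x * Real.exp (-(J x)) + w x * (Real.exp (-(J x)) * -(c x - w x))) x :=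
          (hw x).hasDerivAt.mul ((hJ x).neg.exp)
        rw [hwode x hx.1] at h1
        have h2 : w x * (c x - w x) * Real.exp (-(J x))
            + w x * (Real.exp (-(J x)) * -(c x - w x)) = 0 := by ring
        rw [h2] at h1
        exact h1.hasDerivWithinAt
    have hb' := key b ⟨hb, le_rfl⟩
    simp only [hJdef, intervalIntegral.integral_same, neg_zero, Real.exp_zero, mul_one,
      hwinit] at hb'
    nlinarith [Real.exp_pos (-(J b))]
  -- the key identity: 1/w - 1/W decays like exp(-I)
  have hWd : ∀ t, HasDerivAt W (W t * (c t - W t)) t := by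
    intro t; have := (hW t).hasDerivAt; rwa [hWode t] at this
  have hkey : ∀ t ≥ (0:ℝ), (w t)⁻¹ - (W t)⁻¹ = (w₀⁻¹ - (W 0)⁻¹) * Real.exp (-(I t)) := by
    intro b hb
    have key : ∀ x ∈ Icc (0:ℝ) b,
        (fun t => ((w t)⁻¹ - (W t)⁻¹) * Real.exp (I t)) x
          = (fun t => ((w t)⁻¹ - (W t)⁻¹) * Real.exp (I t)) 0 := by
      apply constant_of_has_deriv_right_zero
      · apply ContinuousOn.mul
        · exact (hwc.continuousOn.inv₀ (fun x hx => (hwpos x hx.1).ne')).sub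
            (hW.continuous.continuousOn.inv₀ fun x _ => (hWpos x).ne')
        · exact (Real.continuous_exp.comp hIc).continuousOn
      · intro x hx
        have hwx : w x ≠ 0 := (hwpos x hx.1).ne'
        have hWx : W x ≠ 0 := (hWpos x).ne'
        have h1 : HasDerivAt (fun t => (w t)⁻¹) (-(w x * (c x - w x)) / w x ^ 2) x := by
          have := (hw x).hasDerivAt.inv hwx
          rwa [hwode x hx.1] at this
        have h2 : HasDerivAt (fun t => (W t)⁻¹) (-(W x * (c x - W x)) / W x ^ 2) x :=
          (hWd x).inv hWx
        have h3 := (h1.sub h2).mul ((hI x).exp)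
        have heq : (-(w x * (c x - w x)) / w x ^ 2 - -(W x * (c x - W x)) / W x ^ 2)
            * Real.exp (I x) + ((w x)⁻¹ - (W x)⁻¹) * (Real.exp (I x) * c x) = 0 := by
          field_simp
          ring
        rw [Pi.sub_apply, heq] at h3
        exact h3.hasDerivWithinAt
    have hb' := key b ⟨hb, le_rfl⟩
    simp only [hIdef, intervalIntegral.integral_same, Real.exp_zero, mul_one, hwinit] at hb'
    rw [Real.exp_neg, ← hb', mul_assoc, mul_inv_cancel₀ (Real.exp_ne_zero _), mul_one]
  -- additivity of I over periods
  have hITpos : 0 < I T := by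
    have h1 : 0 < 1 / T := by positivity
    nlinarith
  have hIadd : ∀ t, I (t + T) = I t + I T := by
    intro t
    have h1 : (∫ s in (0:ℝ)..T, c s) + ∫ s in T..(t + T), c s = I (t + T) :=
      intervalIntegral.integral_add_adjacent_intervals (hc.intervalIntegrable 0 T)
        (hc.intervalIntegrable T (t + T))
    have h2 : (∫ s in (0:ℝ)..t, c s) = ∫ s in T..(t + T), c s := by
      have h3 := intervalIntegral.integral_comp_add_right (a := (0:ℝ)) (b := t) (f := c) T
      simp only [hper, zero_add] at h3
      exact h3
    rw [← h1, ← h2]; ring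
  have hIn : ∀ (n : ℕ) (t : ℝ), I (t + n * T) = I t + n * I T := by
    intro n
    induction n with
    | zero => simp
    | succ k ih =>
      intro t
      have h : t + ((k : ℝ) + 1) * T = (t + k * T) + T := by ring
      push_cast
      rw [h, hIadd, ih]
      ring
  have hWn : ∀ (n : ℕ) (t : ℝ), W (t + n * T) = W t := by
    intro n
    induction n with
    | zero => simp
    | succ k ih =>
      intro t
      have h : t + ((k : ℝ) + 1) * T = (t + k * T) + T := by ring
      push_cast
      rw [h, hWper, ih]
  -- bounds on [0,T]
  obtain ⟨tW, htW, hWmax⟩ := isCompact_Icc.exists_isMaxOn (nonempty_Icc.mpr hT.le)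
    (hW.continuous.continuousOn (s := Icc 0 T))
  set K := W tW with hKdef
  have hK : 0 < K := hWpos tW
  set D0 := w₀⁻¹ - (W 0)⁻¹ with hD0def
  obtain ⟨tM, htM, hMmax⟩ := isCompact_Icc.exists_isMaxOn (nonempty_Icc.mpr hT.le)
    (((continuous_const.mul (Real.continuous_exp.comp hIc.neg)).abs).continuousOn
      (s := Icc 0 T) (f := fun t => |D0 * Real.exp (-(I t))|))
  set M := |D0 * Real.exp (-(I tM))| with hMdef
  have hM0 : 0 ≤ M := abs_nonneg _
  set r := Real.exp (-(I T)) with hrdef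
  have hr0 : 0 < r := Real.exp_pos _
  have hr1 : r < 1 := Real.exp_lt_one_iff.mpr (by linarith)
  set m := K⁻¹ with hmdef
  have hm : 0 < m := inv_pos.mpr hK
  rw [Metric.tendstoUniformlyOn_iff]
  intro ε hε
  set δ := min (m / 2) (ε * m ^ 2 / 4) with hδdef
  have hδ : 0 < δ := lt_min (by positivity) (by positivity)
  have hlim : Tendsto (fun n : ℕ => M * r ^ n) atTop (𝓝 0) := by
    simpa using (tendsto_pow_atTop_nhds_zero_of_lt_one hr0.le hr1).const_mul M
  filter_upwards [hlim.eventually (gt_mem_nhds hδ)] with n hn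
  intro t ht
  have htn : (0:ℝ) ≤ t + n * T := by
    have : (0:ℝ) ≤ (n : ℝ) * T := by positivity
    linarith [ht.1]
  set p := w (t + n * T) with hpdef
  set q := W t with hqdef
  have hp : 0 < p := hwpos _ htn
  have hq : 0 < q := hWpos t
  have hkey' := hkey (t + n * T) htn
  rw [hIn n t, hWn n t] at hkey'
  have hexp : Real.exp (-(I t + (n : ℝ) * I T)) = Real.exp (-(I t)) * r ^ n := by
    have h5 : -(I t + (n : ℝ) * I T) = -(I t) + (n : ℝ) * (-(I T)) := by ring
    rw [h5, Real.exp_add, Real.exp_nat_mul]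
  rw [hexp] at hkey'
  set e := D0 * Real.exp (-(I t)) * r ^ n with hedef
  have h1 : p⁻¹ = q⁻¹ + e := by rw [hedef, mul_assoc, ← hkey']; ring
  have he : |e| ≤ M * r ^ n := by
    rw [hedef, abs_mul, abs_pow, abs_of_pos hr0]
    exact mul_le_mul_of_nonneg_right (hMmax ht) (pow_nonneg hr0.le n)
  have heδ : |e| < δ := lt_of_le_of_lt he hn
  have hδ1 : δ ≤ m / 2 := min_le_left _ _
  have hδ2 : δ ≤ ε * m ^ 2 / 4 := min_le_right _ _
  have hqK : q ≤ K := hWmax ht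
  have hq' : m ≤ q⁻¹ := by
    rw [hmdef]
    exact inv_anti₀ hq hqK
  have hpinv : m / 2 ≤ p⁻¹ := by
    have := neg_abs_le e
    rw [h1]
    linarith
  have hp2 : p ≤ 2 / m := by
    have h6 : (0:ℝ) < m / 2 := by positivity
    have := inv_anti₀ h6 hpinv
    rwa [inv_inv, inv_div] at this
  have hqm : q ≤ m⁻¹ := by rw [hmdef, inv_inv]; exact hqK
  have heq2 : q - p = p * q * e := by
    have h7 : p * q * (p⁻¹ - q⁻¹) = q - p := by field_simp
    have h8 : p⁻¹ - q⁻¹ = e := by rw [h1]; ring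
    rw [← h8]
    exact h7.symm
  rw [Real.dist_eq]
  calc |q - p| = p * q * |e| := by rw [heq2, abs_mul, abs_of_pos (mul_pos hp hq)]
    _ < p * q * δ := mul_lt_mul_of_pos_left heδ (mul_pos hp hq)
    _ ≤ (2 / m) * m⁻¹ * δ := by gcongr
    _ ≤ (2 / m) * m⁻¹ * (ε * m ^ 2 / 4) := by gcongr
    _ = ε / 2 := by field_simp; ring
    _ < ε := by linarith
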